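/- Suppose g is a nonunimodular Lie algebra having codimension-one ideal isomorphic to the Heisenberg algebra H_{2m+1}. Then for every inner product on g, every geodesic element is orthogonal to the center of H_{2m+1}; in particular g admits no basis of geodesic elements. -/

import Mathlib

open LinearMap Module

lemma trace_eq_trace_proj_comp {V : Type*} [AddCommGroup V] [Module ℝ V] [Module.Finite ℝ V]
    (p q : Submodule ℝ V) (h : IsCompl p q) (f : V →ₗ[ℝ] V)
    (hp : ∀ x ∈ p, f x = 0) :
    trace ℝ V f = trace ℝ q ((q.linearProjOfIsCompl p h.symm) ∘ₗ f ∘ₗ q.subtype) := by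
  set πp := p.linearProjOfIsCompl q h with hπp
  set πq := q.linearProjOfIsCompl p h.symm with hπq
  set g := πq ∘ₗ f ∘ₗ q.subtype with hg
  set e := Submodule.prodEquivOfIsCompl p q h with he
  have hsymm : ∀ z : V, e.symm z = (πp z, πq z) := by
    intro z
    rw [LinearEquiv.symm_apply_eq, he, Submodule.coe_prodEquivOfIsCompl']
    exact (Submodule.projection_add_projection_eq_self h z).symm
  set N : p × q →ₗ[ℝ] p × q :=
    (LinearMap.inl ℝ p q) ∘ₗ (πp ∘ₗ f ∘ₗ q.subtype) ∘ₗ (LinearMap.snd ℝ p q) with hN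
  have hNnil : IsNilpotent N := by
    refine ⟨2, ?_⟩
    apply LinearMap.ext
    rintro ⟨x, y⟩
    simp [pow_two, Module.End.mul_apply, hN]
  have key : e.symm.conj f = LinearMap.prodMap 0 g + N := by
    apply LinearMap.ext
    rintro ⟨x, y⟩
    have hfx : f ((x : V) + (y : V)) = f (y : V) := by
      rw [map_add, hp x x.2, zero_add]
    rw [LinearEquiv.conj_apply]
    simp only [LinearMap.coe_comp, Function.comp_apply, LinearEquiv.coe_coe,
      LinearEquiv.symm_symm]
    rw [he, Submodule.coe_prodEquivOfIsCompl', hfx, ← he, hsymm]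
    simp [hN, hg]
  have h1 : trace ℝ (p × q) (e.symm.conj f) = trace ℝ V f := LinearMap.trace_conj' f e.symm
  rw [← h1, key, map_add, LinearMap.trace_prodMap', map_zero, zero_add,
    (LinearMap.isNilpotent_trace_of_isNilpotent hNnil).eq_zero, add_zero]

lemma trace_eq_zero_of_skew {V : Type*} [AddCommGroup V] [Module ℝ V] [Module.Finite ℝ V]
    (Φ : V →ₗ[ℝ] Module.Dual ℝ V) (hinj : Function.Injective Φ)
    (g : V →ₗ[ℝ] V) (hskew : ∀ u v, Φ (g u) v = - Φ u (g v)) :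
    LinearMap.trace ℝ V g = 0 := by
  have : FiniteDimensional ℝ V := ‹Module.Finite ℝ V›
  have hdim : Module.finrank ℝ V = Module.finrank ℝ (Module.Dual ℝ V) :=
    Subspace.dual_finrank_eq.symm
  let e := Φ.linearEquivOfInjective hinj hdim
  have he : ∀ u, e u = Φ u := fun u => LinearMap.linearEquivOfInjective_apply hinj hdim u
  have hkey2 : ∀ u, (-(g.dualMap)) (e u) = e (g u) := by
    intro u
    apply LinearMap.ext
    intro v
    simp only [LinearMap.neg_apply, LinearMap.dualMap_apply, he]
    rw [hskew u v]
  have key : e.symm.conj (-(g.dualMap)) = g := by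
    apply LinearMap.ext
    intro u
    rw [LinearEquiv.conj_apply]
    simp only [LinearMap.coe_comp, Function.comp_apply, LinearEquiv.coe_coe,
      LinearEquiv.symm_symm]
    rw [hkey2, LinearEquiv.symm_apply_apply]
  have h1 : trace ℝ V (e.symm.conj (-(g.dualMap))) = trace ℝ (Module.Dual ℝ V) (-(g.dualMap)) :=
    LinearMap.trace_conj' _ e.symm
  rw [key] at h1
  have h3 := (LinearMap.trace ℝ (Module.Dual ℝ V)).map_neg g.dualMap
  rw [h3] at h1
  have h2 : trace ℝ (Module.Dual ℝ V) (g.dualMap) = trace ℝ V g := by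
    rw [LinearMap.dualMap_def, LinearMap.trace_transpose']
  rw [h2] at h1
  linarith

/-- Let `g` be a nonunimodular finite-dimensional real Lie algebra having a
codimension-one ideal `H` isomorphic to the Heisenberg algebra `H_{2m+1}`
(encoded structurally: `Z` spans the center of `H`, which coincides with the
derived algebra of `H`, `Y` complements `H`, and `⁅Y, Z⁆ = λ • Z`).  Then, for
every inner product `B` on `g`, every geodesic element is orthogonal to `Z`;
in particular `g` has no basis of geodesic elements. -/
theorem nonunimodular_heisenberg_ideal_no_geodesic_basis
    {L : Type*} [LieRing L] [LieAlgebra ℝ L] [Module.Finite ℝ L]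
    (Y Z : L) (H : LieIdeal ℝ L) (lam : ℝ)
    (hZH : Z ∈ H) (hZ : Z ≠ 0)
    (hYH : Y ∉ H)
    (hspan : Submodule.span ℝ {Y} ⊔ H.toSubmodule = ⊤)
    (hZcent : ∀ a ∈ H, ⁅Z, a⁆ = (0 : L))
    (hder : ∀ a ∈ H, ∀ b ∈ H, ∃ c : ℝ, ⁅a, b⁆ = c • Z)
    (hcent : ∀ a ∈ H, (∀ b ∈ H, ⁅a, b⁆ = (0 : L)) → ∃ c : ℝ, a = c • Z)
    (hYZ : ⁅Y, Z⁆ = lam • Z)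
    (hnonuni : ∃ T : L, LinearMap.trace ℝ L (LieAlgebra.ad ℝ L T) ≠ 0)
    (B : L →ₗ[ℝ] L →ₗ[ℝ] ℝ)
    (hsymm : ∀ x y : L, B x y = B y x)
    (hpos : ∀ x : L, x ≠ 0 → 0 < B x x) :
    (∀ X : L, X ≠ 0 → (∀ W : L, B X ⁅X, W⁆ = 0) → B X Z = 0) ∧
    ¬ ∃ b : Basis (Fin (Module.finrank ℝ L)) ℝ L,
        ∀ i, b i ≠ 0 ∧ ∀ W : L, B (b i) ⁅b i, W⁆ = 0 := by
  classical
  have hFD : FiniteDimensional ℝ L := ‹Module.Finite ℝ L›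
  -- decomposition of any element
  have hdec : ∀ T : L, ∃ a : ℝ, ∃ h, h ∈ H ∧ T = a • Y + h := by
    intro T
    have hT : T ∈ Submodule.span ℝ {Y} ⊔ H.toSubmodule := by rw [hspan]; trivial
    obtain ⟨u, hu, v, hv, huv⟩ := Submodule.mem_sup.mp hT
    obtain ⟨a, rfl⟩ := Submodule.mem_span_singleton.mp hu
    exact ⟨a, v, hv, huv.symm⟩
  have hZbr : ∀ h ∈ H, ⁅h, Z⁆ = (0 : L) := by
    intro h hh
    rw [← lie_skew, hZcent h hh, neg_zero]
  -- key: lam ≠ 0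
  have hlam : lam ≠ 0 := by
    intro hl0
    obtain ⟨T, hT⟩ := hnonuni
    apply hT
    obtain ⟨a, h, hh, rfl⟩ := hdec T
    have hadd : LieAlgebra.ad ℝ L (a • Y + h)
        = a • LieAlgebra.ad ℝ L Y + LieAlgebra.ad ℝ L h := by
      simp [map_add, map_smul]
    -- trace of ad h is zero (nilpotent)
    have hcube : (LieAlgebra.ad ℝ L h) ^ 3 = 0 := by
      apply LinearMap.ext
      intro x
      have h1 : ⁅h, x⁆ ∈ H := lie_mem_left ℝ L H h x hh
      obtain ⟨c, hc⟩ := hder h hh _ h1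
      show ⁅h, ⁅h, ⁅h, x⁆⁆⁆ = 0
      rw [hc, lie_smul, hZbr h hh, smul_zero]
    have htrh : LinearMap.trace ℝ L (LieAlgebra.ad ℝ L h) = 0 :=
      (LinearMap.isNilpotent_trace_of_isNilpotent ⟨3, hcube⟩).eq_zero
    -- set up the complement U of span {Z} inside H
    obtain ⟨C, hC⟩ := Submodule.exists_isCompl
      (Submodule.span ℝ {(⟨Z, hZH⟩ : H.toSubmodule)})
    set U : Submodule ℝ L := C.map H.toSubmodule.subtype with hU
    have hUH : ∀ u ∈ U, u ∈ H := by
      rintro u ⟨c, hc, rfl⟩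
      exact c.2
    have hHdecomp : ∀ b ∈ H, ∃ t : ℝ, ∃ u, u ∈ U ∧ b = t • Z + u := by
      intro b hb
      have : (⟨b, hb⟩ : H.toSubmodule) ∈
          Submodule.span ℝ {(⟨Z, hZH⟩ : H.toSubmodule)} ⊔ C := by
        rw [hC.sup_eq_top]; trivial
      obtain ⟨s, hs, c, hcC, heq⟩ := Submodule.mem_sup.mp this
      obtain ⟨t, rfl⟩ := Submodule.mem_span_singleton.mp hs
      refine ⟨t, (c : L), ⟨c, hcC, rfl⟩, ?_⟩
      have := congrArg (fun x : H.toSubmodule => (x : L)) heq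
      simpa using this.symm
    have hUZ : ∀ x, x ∈ U → x ∈ Submodule.span ℝ {Z} → x = (0 : L) := by
      rintro x ⟨c, hcC, rfl⟩ hxz
      obtain ⟨t, ht⟩ := Submodule.mem_span_singleton.mp hxz
      have hc : c = t • (⟨Z, hZH⟩ : H.toSubmodule) := by
        apply Subtype.ext
        exact ht.symm
      have hmem : c ∈ Submodule.span ℝ {(⟨Z, hZH⟩ : H.toSubmodule)} :=
        Submodule.mem_span_singleton.mpr ⟨t, hc.symm⟩
      have : c = 0 := (Submodule.disjoint_def.mp hC.disjoint.symm) c hcC hmem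
      rw [this]; rfl
    set K : Submodule ℝ L := Submodule.span ℝ {Y} ⊔ Submodule.span ℝ {Z} with hK
    have hKdec : ∀ x ∈ K, ∃ a b : ℝ, x = a • Y + b • Z := by
      intro x hx
      obtain ⟨u, hu, v, hv, huv⟩ := Submodule.mem_sup.mp hx
      obtain ⟨a, rfl⟩ := Submodule.mem_span_singleton.mp hu
      obtain ⟨b, rfl⟩ := Submodule.mem_span_singleton.mp hv
      exact ⟨a, b, huv.symm⟩
    have hYK : Y ∈ K := Submodule.mem_sup_left (Submodule.mem_span_singleton_self Y)
    have hZK : Z ∈ K := Submodule.mem_sup_right (Submodule.mem_span_singleton_self Z)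
    -- K ∩ H ⊆ span Z
    have hKH : ∀ k ∈ K, k ∈ H → ∀ v ∈ H, ⁅k, v⁆ = (0 : L) := by
      intro k hk hkH v hv
      obtain ⟨a, b, rfl⟩ := hKdec k hk
      have haY : a • Y ∈ H.toSubmodule := by
        have : a • Y = (a • Y + b • Z) - b • Z := by abel
        rw [this]
        exact sub_mem hkH (Submodule.smul_mem _ b hZH)
      have ha : a = 0 := by
        by_contra ha
        exact hYH (by
          have := Submodule.smul_mem H.toSubmodule a⁻¹ haY
          rwa [smul_smul, inv_mul_cancel₀ ha, one_smul] at this)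
      rw [ha, zero_smul, zero_add, smul_lie, hZcent v hv, smul_zero]
    have hcompl : IsCompl K U := by
      constructor
      · rw [disjoint_iff]
        rw [Submodule.eq_bot_iff]
        rintro x ⟨hxK, hxU⟩
        obtain ⟨a, b, rfl⟩ := hKdec x hxK
        have hxH : a • Y + b • Z ∈ H := hUH _ hxU
        have haY : a • Y ∈ H.toSubmodule := by
          have : a • Y = (a • Y + b • Z) - b • Z := by abel
          rw [this]
          exact sub_mem hxH (Submodule.smul_mem _ b hZH)
        have ha : a = 0 := by
          by_contra ha
          exact hYH (by
            have := Submodule.smul_mem H.toSubmodule a⁻¹ haY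
            rwa [smul_smul, inv_mul_cancel₀ ha, one_smul] at this)
        refine hUZ _ hxU ?_
        rw [ha, zero_smul, zero_add]
        exact Submodule.mem_span_singleton.mpr ⟨b, rfl⟩
      · rw [codisjoint_iff, eq_top_iff, ← hspan]
        apply sup_le
        · refine le_trans ?_ le_sup_left
          rw [Submodule.span_le, Set.singleton_subset_iff]
          exact hYK
        · intro b hb
          obtain ⟨t, u, huU, hbu⟩ := hHdecomp b hb
          rw [hbu]
          exact add_mem (Submodule.mem_sup_left (Submodule.smul_mem _ t hZK))
            (Submodule.mem_sup_right huU)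
    set πU := U.linearProjOfIsCompl K hcompl.symm with hπU
    set g := πU ∘ₗ (LieAlgebra.ad ℝ L Y) ∘ₗ U.subtype with hg
    have htrY : LinearMap.trace ℝ L (LieAlgebra.ad ℝ L Y) = LinearMap.trace ℝ U g := by
      apply trace_eq_trace_proj_comp K U hcompl
      intro x hx
      obtain ⟨a, b, rfl⟩ := hKdec x hx
      show ⁅Y, a • Y + b • Z⁆ = 0
      rw [lie_add, lie_smul, lie_smul, lie_self, hYZ, hl0, zero_smul,
        smul_zero, smul_zero, add_zero]
    -- dual functional with f₀ Z = 1
    obtain ⟨φ, hφ⟩ : ∃ φ : Module.Dual ℝ L, φ Z ≠ 0 := by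
      by_contra hcon
      push_neg at hcon
      exact hZ ((Module.forall_dual_apply_eq_zero_iff ℝ Z).mp hcon)
    set f₀ : Module.Dual ℝ L := (φ Z)⁻¹ • φ with hf₀def
    have hf₀ : f₀ Z = 1 := by
      rw [hf₀def]
      simp [inv_mul_cancel₀ hφ]
    have hf₀' : ∀ (c : ℝ) (w : L), w = c • Z → f₀ w = c := by
      intro c w hw
      rw [hw, map_smul, hf₀, smul_eq_mul, mul_one]
    -- bilinear form on U
    set Φ : U →ₗ[ℝ] Module.Dual ℝ U := LinearMap.mk₂ ℝ
      (fun u v : U => f₀ ⁅(u : L), (v : L)⁆)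
      (by intro x y z; simp [add_lie])
      (by intro c x y; simp [smul_lie])
      (by intro x y z; simp [lie_add])
      (by intro c x y; simp [lie_smul]) with hΦdef
    have hΦapp : ∀ u v : U, Φ u v = f₀ ⁅(u : L), (v : L)⁆ := fun u v => rfl
    -- skewness of g wrt Φ
    have hgad : ∀ u : U, ∀ v ∈ H, f₀ ⁅((g u : U) : L), v⁆ = f₀ ⁅⁅Y, (u : L)⁆, v⁆ := by
      intro u v hv
      have hDH : ⁅Y, (u : L)⁆ ∈ H := lie_mem_right ℝ L H Y (u : L) (hUH _ u.2)
      have hsum : ((K.linearProjOfIsCompl U hcompl ⁅Y, (u : L)⁆ : K) : L)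
          + ((πU ⁅Y, (u : L)⁆ : U) : L) = ⁅Y, (u : L)⁆ :=
        Submodule.projection_add_projection_eq_self hcompl _
      have hgu : ((g u : U) : L) = ((πU ⁅Y, (u : L)⁆ : U) : L) := rfl
      have hpu : ((πU ⁅Y, (u : L)⁆ : U) : L)
          = ⁅Y, (u : L)⁆ - ((K.linearProjOfIsCompl U hcompl ⁅Y, (u : L)⁆ : K) : L) :=
        eq_sub_of_add_eq' hsum
      have hkK : ((K.linearProjOfIsCompl U hcompl ⁅Y, (u : L)⁆ : K) : L) ∈ K :=
        (K.linearProjOfIsCompl U hcompl ⁅Y, (u : L)⁆).2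
      have hkH : ((K.linearProjOfIsCompl U hcompl ⁅Y, (u : L)⁆ : K) : L) ∈ H := by
        have hk2 : ((K.linearProjOfIsCompl U hcompl ⁅Y, (u : L)⁆ : K) : L)
            = ⁅Y, (u : L)⁆ - ((πU ⁅Y, (u : L)⁆ : U) : L) := eq_sub_of_add_eq hsum
        rw [hk2]
        exact sub_mem hDH (hUH _ (πU ⁅Y, (u : L)⁆).2)
      rw [hgu, hpu, sub_lie, hKH _ hkK hkH v hv, sub_zero]
    have hskew : ∀ u v : U, Φ (g u) v = - Φ u (g v) := by
      intro u v
      have huH : (u : L) ∈ H := hUH _ u.2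
      have hvH : (v : L) ∈ H := hUH _ v.2
      have h1 : Φ (g u) v = f₀ ⁅⁅Y, (u : L)⁆, (v : L)⁆ := by
        rw [hΦapp]
        exact hgad u (v : L) hvH
      have h2 : Φ u (g v) = f₀ ⁅(u : L), ⁅Y, (v : L)⁆⁆ := by
        rw [hΦapp]
        calc f₀ ⁅(u : L), ((g v : U) : L)⁆
            = - f₀ ⁅((g v : U) : L), (u : L)⁆ := by
              rw [← lie_skew (u : L) ((g v : U) : L), map_neg]
          _ = - f₀ ⁅⁅Y, (v : L)⁆, (u : L)⁆ := by rw [hgad v (u : L) huH]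
          _ = f₀ ⁅(u : L), ⁅Y, (v : L)⁆⁆ := by
              rw [← lie_skew (u : L) ⁅Y, (v : L)⁆, map_neg]
      obtain ⟨c, hc⟩ := hder (u : L) huH (v : L) hvH
      have hleib : ⁅⁅Y, (u : L)⁆, (v : L)⁆ + ⁅(u : L), ⁅Y, (v : L)⁆⁆
          = ⁅Y, ⁅(u : L), (v : L)⁆⁆ := (leibniz_lie Y (u : L) (v : L)).symm
      have hzero : f₀ ⁅⁅Y, (u:L)⁆, (v:L)⁆ + f₀ ⁅(u:L), ⁅Y, (v:L)⁆⁆ = 0 := by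
        rw [← map_add, hleib, hc, lie_smul, hYZ, hl0, zero_smul, smul_zero, map_zero]
      rw [h1, h2]
      linarith
    -- injectivity of Φ
    have hinj : Function.Injective Φ := by
      rw [← LinearMap.ker_eq_bot]
      rw [LinearMap.ker_eq_bot']
      intro u hu
      have hbr0 : ∀ b ∈ H, ⁅(u : L), b⁆ = (0 : L) := by
        intro b hb
        obtain ⟨t, w, hwU, hbw⟩ := hHdecomp b hb
        have huZ : ⁅(u : L), Z⁆ = 0 := hZbr (u : L) (hUH _ u.2)
        have hwH : w ∈ H := hUH _ hwU
        obtain ⟨c, hc⟩ := hder (u : L) (hUH _ u.2) w hwH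
        have hc0 : c = 0 := by
          have := congrArg (fun ψ : Module.Dual ℝ U => ψ ⟨w, hwU⟩) hu
          simp only [LinearMap.zero_apply] at this
          rw [hΦapp] at this
          rw [← hf₀' c ⁅(u : L), w⁆ hc]
          exact this
        rw [hbw, lie_add, lie_smul, huZ, smul_zero, zero_add, hc, hc0, zero_smul]
      obtain ⟨c, hc⟩ := hcent (u : L) (hUH _ u.2) hbr0
      have : (u : L) = 0 := hUZ (u : L) u.2 (Submodule.mem_span_singleton.mpr ⟨c, hc.symm⟩)
      exact Subtype.ext this
    have htrg : LinearMap.trace ℝ U g = 0 := trace_eq_zero_of_skew Φ hinj g hskew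
    rw [hadd, map_add, map_smul, htrh, htrY, htrg, smul_zero, add_zero]
  -- Part 1
  have part1 : ∀ X : L, X ≠ 0 → (∀ W : L, B X ⁅X, W⁆ = 0) → B X Z = 0 := by
    intro X hX hgeo
    obtain ⟨a, h, hh, hXd⟩ := hdec X
    by_cases ha : a = 0
    · rw [ha, zero_smul, zero_add] at hXd
      subst hXd
      by_cases hc : ∀ b ∈ H, ⁅X, b⁆ = (0 : L)
      · obtain ⟨c, hcZ⟩ := hcent X hh hc
        have hc0 : c ≠ 0 := by
          intro h0
          rw [h0, zero_smul] at hcZ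
          exact hX hcZ
        have hbr : ⁅X, Y⁆ = (-(c * lam)) • Z := by
          rw [hcZ, smul_lie, ← lie_skew Z Y, hYZ, smul_neg, smul_smul, neg_smul]
        have := hgeo Y
        rw [hbr, map_smul, smul_eq_mul] at this
        have hcl : c * lam ≠ 0 := mul_ne_zero hc0 hlam
        have : B X Z = 0 := by
          rcases mul_eq_zero.mp (by linarith : -(c * lam) * B X Z = 0) with h' | h'
          · exact absurd (neg_eq_zero.mp h') hcl
          · exact h'
        exact this
      · push_neg at hc
        obtain ⟨b, hb, hbne⟩ := hc
        obtain ⟨c, hcb⟩ := hder X hh b hb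
        have hc0 : c ≠ 0 := by
          intro h0
          rw [h0, zero_smul] at hcb
          exact hbne hcb
        have := hgeo b
        rw [hcb, map_smul, smul_eq_mul] at this
        rcases mul_eq_zero.mp this with h' | h'
        · exact absurd h' hc0
        · exact h'
    · have hbrZ : ⁅X, Z⁆ = (a * lam) • Z := by
        rw [hXd, add_lie, smul_lie, hYZ, hZbr h hh, add_zero, smul_smul]
      have := hgeo Z
      rw [hbrZ, map_smul, smul_eq_mul] at this
      rcases mul_eq_zero.mp this with h' | h'
      · exact absurd h' (mul_ne_zero ha hlam)
      · exact h'
  refine ⟨part1, ?_⟩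
  rintro ⟨b, hb⟩
  have hz : ∀ i, B Z (b i) = 0 := by
    intro i
    rw [hsymm]
    exact part1 (b i) (hb i).1 (hb i).2
  have h0 : ∀ x : L, B Z x = 0 := by
    intro x
    rw [← b.sum_repr x, map_sum]
    simp [hz]
  exact absurd (h0 Z) (ne_of_gt (hpos Z hZ))
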